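/- Let p1, p0, q1, q0 be polynomials in ℝ[x,y] (formally, MvPolynomial (Fin 2) ℝ) and define S0 = (p0 − q0)² − (p1 − q1)·(p0·q1 − q0·p1). Suppose v : Fin 2 → ℝ satisfies S0(v) = 0, (∂S0/∂x)(v) = 0, (∂S0/∂y)(v) = 0 and p1(v) ≠ q1(v), and set z0 = −(q0(v) − p0(v)) / (q1(v) − p1(v)). Then Fx·Gz − Fz·Gx = 0 and Fy·Gz − Fz·Gy = 0, where Fx = z0·(∂p1/∂x)(v) + (∂p0/∂x)(v), Fy = z0·(∂p1/∂y)(v) + (∂p0/∂y)(v), Fz = 2·z0 + p1(v), and Gx, Gy, Gz are defined analogously with q1, q0 in place of p1, p0. -/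

import Mathlib

open MvPolynomial

/-- At a singular point of the cutcurve outside the line p1 = q1, the 2×2
    minors of the gradients of f and g involving the z-derivative vanish. -/
theorem stmt_7 (p1 p0 q1 q0 : MvPolynomial (Fin 2) ℝ)
    (S0 : MvPolynomial (Fin 2) ℝ)
    (hS0 : S0 = (p0 - q0) ^ 2 - (p1 - q1) * (p0 * q1 - q0 * p1))
    (v : Fin 2 → ℝ)
    (hv : eval v S0 = 0)
    (hvx : eval v (pderiv (0 : Fin 2) S0) = 0)
    (hvy : eval v (pderiv (1 : Fin 2) S0) = 0)
    (hne : eval v p1 ≠ eval v q1)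
    (z0 : ℝ)
    (hz0 : z0 = -(eval v q0 - eval v p0) / (eval v q1 - eval v p1))
    (Fx Fy Fz Gx Gy Gz : ℝ)
    (hFx : Fx = z0 * eval v (pderiv (0 : Fin 2) p1) + eval v (pderiv (0 : Fin 2) p0))
    (hFy : Fy = z0 * eval v (pderiv (1 : Fin 2) p1) + eval v (pderiv (1 : Fin 2) p0))
    (hFz : Fz = 2 * z0 + eval v p1)
    (hGx : Gx = z0 * eval v (pderiv (0 : Fin 2) q1) + eval v (pderiv (0 : Fin 2) q0))
    (hGy : Gy = z0 * eval v (pderiv (1 : Fin 2) q1) + eval v (pderiv (1 : Fin 2) q0))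
    (hGz : Gz = 2 * z0 + eval v q1) :
    Fx * Gz - Fz * Gx = 0 ∧ Fy * Gz - Fz * Gy = 0 := by
  subst hS0 hFx hFy hFz hGx hGy hGz
  set A1 := eval v p1 with hA1
  set A0 := eval v p0 with hA0
  set B1 := eval v q1 with hB1
  set B0 := eval v q0 with hB0
  set a1 := eval v (pderiv (0 : Fin 2) p1) with ha1
  set a0 := eval v (pderiv (0 : Fin 2) p0) with ha0
  set b1 := eval v (pderiv (0 : Fin 2) q1) with hb1
  set b0 := eval v (pderiv (0 : Fin 2) q0) with hb0
  set c1 := eval v (pderiv (1 : Fin 2) p1) with hc1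
  set c0 := eval v (pderiv (1 : Fin 2) p0) with hc0
  set d1 := eval v (pderiv (1 : Fin 2) q1) with hd1'
  set d0 := eval v (pderiv (1 : Fin 2) q0) with hd0'
  have hne' : A1 - B1 ≠ 0 := sub_ne_zero.mpr hne
  have hne'' : B1 - A1 ≠ 0 := sub_ne_zero.mpr (Ne.symm hne)
  have hv' : (A0 - B0) ^ 2 - (A1 - B1) * (A0 * B1 - B0 * A1) = 0 := by
    simpa [map_sub, map_mul, map_pow] using hv
  have hvx' : 2 * (A0 - B0) * (a0 - b0) - (a1 - b1) * (A0 * B1 - B0 * A1)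
      - (A1 - B1) * (a0 * B1 + A0 * b1 - b0 * A1 - B0 * a1) = 0 := by
    rw [show (2 : ℝ) * (A0 - B0) * (a0 - b0) - (a1 - b1) * (A0 * B1 - B0 * A1)
      - (A1 - B1) * (a0 * B1 + A0 * b1 - b0 * A1 - B0 * a1)
      = eval v (pderiv (0 : Fin 2) ((p0 - q0) ^ 2 - (p1 - q1) * (p0 * q1 - q0 * p1))) by
      simp only [map_sub, pderiv_mul, pderiv_pow, map_mul, map_add, map_pow, map_ofNat,
        Nat.cast_ofNat, ha1, ha0, hb1, hb0, hA1, hA0, hB1, hB0]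
      ring]
    exact hvx
  have hvy' : 2 * (A0 - B0) * (c0 - d0) - (c1 - d1) * (A0 * B1 - B0 * A1)
      - (A1 - B1) * (c0 * B1 + A0 * d1 - d0 * A1 - B0 * c1) = 0 := by
    rw [show (2 : ℝ) * (A0 - B0) * (c0 - d0) - (c1 - d1) * (A0 * B1 - B0 * A1)
      - (A1 - B1) * (c0 * B1 + A0 * d1 - d0 * A1 - B0 * c1)
      = eval v (pderiv (1 : Fin 2) ((p0 - q0) ^ 2 - (p1 - q1) * (p0 * q1 - q0 * p1))) by
      simp only [map_sub, pderiv_mul, pderiv_pow, map_mul, map_add, map_pow, map_ofNat,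
        Nat.cast_ofNat, hc1, hc0, hd1', hd0', hA1, hA0, hB1, hB0]
      ring]
    exact hvy
  have hd0 : z0 * (B1 - A1) = A0 - B0 := by
    rw [hz0]; field_simp; ring
  have hM : A0 * B1 - B0 * A1 = z0 ^ 2 * (A1 - B1) := by
    refine mul_left_cancel₀ hne' ?_
    linear_combination -hv' + (z0 * (A1 - B1) - (A0 - B0)) * hd0
  have hg : z0 ^ 2 + B1 * z0 + B0 = 0 := by
    refine mul_left_cancel₀ hne' ?_
    linear_combination -hM - B1 * hd0
  have hf : z0 ^ 2 + A1 * z0 + A0 = 0 := by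
    linear_combination hg - hd0
  have hrelx : 2 * z0 * (a0 - b0) + z0 ^ 2 * (a1 - b1)
      + (a0 * B1 + A0 * b1 - b0 * A1 - B0 * a1) = 0 := by
    refine mul_left_cancel₀ hne' ?_
    linear_combination -hvx' - 2 * (a0 - b0) * hd0 - (a1 - b1) * hM
  have hrely : 2 * z0 * (c0 - d0) + z0 ^ 2 * (c1 - d1)
      + (c0 * B1 + A0 * d1 - d0 * A1 - B0 * c1) = 0 := by
    refine mul_left_cancel₀ hne' ?_
    linear_combination -hvy' - 2 * (c0 - d0) * hd0 - (c1 - d1) * hM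
  constructor
  · linear_combination hrelx + a1 * hg - b1 * hf
  · linear_combination hrely + c1 * hg - d1 * hf
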